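/- arXiv:2101.02838 — 2 statements merged into one kernel-verified Lean document; each statement's English description precedes it below -/
import Mathlib

section
/- For every integer k ≥ 2, a finite connected simple graph G is a (k,3)-completeness-resolvable graph if and only if G is isomorphic to a graph in C_k. -/
open SimpleGraph

/-- `w` enumerates a `(k, m)`-completeness-resolving set of `G`:
`w` is injective, its range `W` is a proper subset of the vertex set, and the map
`u ↦ (dist (w 1) u, …, dist (w k) u)` is a bijection from `V ∖ W` onto `[m]^k`. -/
def IsCRS {V : Type*} (G : SimpleGraph V) {k : ℕ} (w : Fin k → V) (m : ℕ) : Prop :=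
  Function.Injective w ∧ Set.range w ≠ Set.univ ∧
    Function.Injective
      (fun u : {u : V // u ∉ Set.range w} => fun i : Fin k => G.dist (w i) u.1) ∧
    Set.range (fun u : {u : V // u ∉ Set.range w} => fun i : Fin k => G.dist (w i) u.1) =
      {x : Fin k → ℕ | ∀ i, 1 ≤ x i ∧ x i ≤ m}

/-- `G` is a `(k, m)`-completeness-resolvable graph. -/
def IsCRG {V : Type*} (G : SimpleGraph V) (k m : ℕ) : Prop :=
  ∃ w : Fin k → V, IsCRS G w m

/-- `G` is completeness-resolvable. -/
def CompletenessResolvable {V : Type*} (G : SimpleGraph V) : Prop :=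
  ∃ (k m : ℕ) (w : Fin k → V), IsCRS G w m

/-! ### The family `B_k`.
Tuples in `[2]^k` are modelled as functions `Fin k → Fin 2`, the `Fin 2`-value `j`
corresponding to the entry `j + 1 ∈ {1, 2}`. -/

/-- The graph `H1 ∘ H2` on `[k] ⊔ [2]^k`. -/
def comp2 {k : ℕ} (H1 : SimpleGraph (Fin k)) (H2 : SimpleGraph (Fin k → Fin 2)) :
    SimpleGraph (Fin k ⊕ (Fin k → Fin 2)) where
  Adj a b :=
    match a, b with
    | Sum.inl i, Sum.inl j => H1.Adj i j
    | Sum.inr x, Sum.inr y => H2.Adj x y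
    | Sum.inl i, Sum.inr x => x i = 0
    | Sum.inr x, Sum.inl i => x i = 0
  symm := by
    constructor
    rintro (i | x) (j | y) h
    · exact H1.symm.symm _ _ h
    · exact h
    · exact h
    · exact H2.symm.symm _ _ h
  loopless := by
    constructor
    rintro (i | x) h
    · exact H1.loopless.irrefl i h
    · exact H2.loopless.irrefl x h

/-- The defining condition of `B_k`: for each `i`, the edges of `H2` lying in the complete
bipartite graph `B_i^k` (i.e. joining a tuple with `i`-th entry `1` to one with `i`-th entry `2`)
cover every tuple all of whose entries on the closed neighbourhood of `i` in `H1` equal `2`. -/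
def BCond {k : ℕ} (H1 : SimpleGraph (Fin k)) (H2 : SimpleGraph (Fin k → Fin 2)) : Prop :=
  ∀ (i : Fin k) (x : Fin k → Fin 2),
    (∀ j : Fin k, (j = i ∨ H1.Adj i j) → x j = 1) →
    ∃ y : Fin k → Fin 2, H2.Adj x y ∧ y i ≠ x i

/-- The family `B_k`, as a set of graphs on `[k] ⊔ [2]^k`. -/
def Bset (k : ℕ) : Set (SimpleGraph (Fin k ⊕ (Fin k → Fin 2))) :=
  {G | ∃ H1 H2, BCond H1 H2 ∧ G = comp2 H1 H2}

/-- `H2` is `H1`-minimal. -/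
def H1Minimal {k : ℕ} (H1 : SimpleGraph (Fin k)) (H2 : SimpleGraph (Fin k → Fin 2)) : Prop :=
  comp2 H1 H2 ∈ Bset k ∧
    ∀ H2' : SimpleGraph (Fin k → Fin 2), H2' < H2 → comp2 H1 H2' ∉ Bset k

/-- The graph `U_k` on `[2]^k`, with unique edge `{(1,…,1), (2,…,2)}`. -/
def Uk (k : ℕ) : SimpleGraph (Fin k → Fin 2) :=
  SimpleGraph.fromEdgeSet {s(fun _ => (0 : Fin 2), fun _ => (1 : Fin 2))}

/-- The graph `V_k` on `[2]^k`, whose edges join `(2,…,2)` to the tuples having exactly one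
entry equal to `1`. -/
def Vk (k : ℕ) : SimpleGraph (Fin k → Fin 2) :=
  SimpleGraph.fromEdgeSet
    {e | ∃ i : Fin k, e = s(Function.update (fun _ => (1 : Fin 2)) i 0, fun _ => (1 : Fin 2))}

/-- The graph `R_k` on `[2]^k`: the perfect matching pairing each tuple with its complement. -/
def Rk (k : ℕ) : SimpleGraph (Fin k → Fin 2) :=
  SimpleGraph.fromRel fun x y => ∀ i, x i ≠ y i

/-- The hypercube graph `Q_k` on `[2]^k`: tuples are adjacent when they differ in exactly one
coordinate. -/
def Qk (k : ℕ) : SimpleGraph (Fin k → Fin 2) :=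
  SimpleGraph.fromRel fun x y => ∃ i, x i ≠ y i ∧ ∀ j, j ≠ i → x j = y j

/-! ### The family `C_k`.
Tuples in `[3]^k` are modelled as functions `Fin k → Fin 3`, the `Fin 3`-value `j`
corresponding to the entry `j + 1 ∈ {1, 2, 3}`. -/

/-- Entries `a` and `b` (of `{1,2,3}`, coded in `Fin 3`) satisfy `|a - b| ≤ 1`. -/
def near3 (a b : Fin 3) : Prop := (a : ℕ) ≤ (b : ℕ) + 1 ∧ (b : ℕ) ≤ (a : ℕ) + 1

/-- `{x, y}` is an edge of the bipartite graph `C_i^k` (between `i`-th entry `1` and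
`i`-th entry `2`, with all other entries differing by at most `1`). -/
def CAdj {k : ℕ} (i : Fin k) (x y : Fin k → Fin 3) : Prop :=
  ((x i = 0 ∧ y i = 1) ∨ (x i = 1 ∧ y i = 0)) ∧ ∀ t, t ≠ i → near3 (x t) (y t)

/-- `{x, y}` is an edge of the bipartite graph `D_i^k` (between `i`-th entry `2` and
`i`-th entry `3`, with all other entries differing by at most `1`). -/
def DAdj {k : ℕ} (i : Fin k) (x y : Fin k → Fin 3) : Prop :=
  ((x i = 1 ∧ y i = 2) ∨ (x i = 2 ∧ y i = 1)) ∧ ∀ t, t ≠ i → near3 (x t) (y t)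

/-- The graph `K̄_[k] ∘ H2` on `[k] ⊔ [3]^k`. -/
def comp3 {k : ℕ} (H2 : SimpleGraph (Fin k → Fin 3)) :
    SimpleGraph (Fin k ⊕ (Fin k → Fin 3)) where
  Adj a b :=
    match a, b with
    | Sum.inl _, Sum.inl _ => False
    | Sum.inr x, Sum.inr y => H2.Adj x y
    | Sum.inl i, Sum.inr x => x i = 0
    | Sum.inr x, Sum.inl i => x i = 0
  symm := by
    constructor
    rintro (i | x) (j | y) h
    · exact h
    · exact h
    · exact h
    · exact H2.symm.symm _ _ h
  loopless := by
    constructor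
    rintro (i | x) h
    · exact h
    · exact H2.loopless.irrefl x h

/-- The defining condition of `C_k`: every edge of `H2` lies in some `C_i^k` or `D_i^k`;
for each `i` the edges of `H2` in `C_i^k` cover `[3]^k_i(2)`, and the edges of `H2` in
`D_i^k` cover `S_i^k`. -/
def CCond {k : ℕ} (H2 : SimpleGraph (Fin k → Fin 3)) : Prop :=
  (∀ x y, H2.Adj x y → ∃ i, CAdj i x y ∨ DAdj i x y) ∧
  (∀ (i : Fin k) (x : Fin k → Fin 3), x i = 1 → ∃ y, H2.Adj x y ∧ CAdj i x y) ∧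
  (∀ (i : Fin k) (x : Fin k → Fin 3), x i = 2 → (∀ t, x t ≠ 0) →
    ∃ y, H2.Adj x y ∧ DAdj i x y)

/-- The family `C_k`, as a set of graphs on `[k] ⊔ [3]^k`. -/
def Cset (k : ℕ) : Set (SimpleGraph (Fin k ⊕ (Fin k → Fin 3))) :=
  {G | ∃ H2, CCond H2 ∧ G = comp3 H2}

/-- The graph `Γ_k` on `[3]^k`: distinct tuples are adjacent when all their entries differ
by at most `1`. -/
def GammaK (k : ℕ) : SimpleGraph (Fin k → Fin 3) :=
  SimpleGraph.fromRel fun x y => ∀ i, near3 (x i) (y i)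

/-- `H2` is `k`-minimal. -/
def KMinimalC {k : ℕ} (H2 : SimpleGraph (Fin k → Fin 3)) : Prop :=
  comp3 H2 ∈ Cset k ∧
    ∀ H2' : SimpleGraph (Fin k → Fin 3), H2' < H2 → comp3 H2' ∉ Cset k


/-! ### Auxiliary lemmas -/

private lemma iso_dist_le {V W : Type*} {G : SimpleGraph V} {H : SimpleGraph W}
    (f : G ≃g H) (u v : V) : H.dist (f u) (f v) ≤ G.dist u v := by
  by_cases hr : G.Reachable u v
  · obtain ⟨p, hp⟩ := hr.exists_walk_length_eq_dist
    calc H.dist (f u) (f v) ≤ (p.map f.toHom).length := dist_le _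
      _ = p.length := p.length_map _
      _ = G.dist u v := hp
  · have hH : ¬ H.Reachable (f u) (f v) := fun h => hr (by
      have := h.map f.symm.toHom
      simpa using this)
    simp [dist_eq_zero_of_not_reachable hr, dist_eq_zero_of_not_reachable hH]

private lemma iso_dist {V W : Type*} {G : SimpleGraph V} {H : SimpleGraph W}
    (f : G ≃g H) (u v : V) : H.dist (f u) (f v) = G.dist u v :=
  le_antisymm (iso_dist_le f u v) (by
    have := iso_dist_le f.symm (f u) (f v)
    simpa using this)

private instance near3Dec (a b : Fin 3) : Decidable (near3 a b) :=
  inferInstanceAs (Decidable ((a : ℕ) ≤ (b : ℕ) + 1 ∧ (b : ℕ) ≤ (a : ℕ) + 1))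

private lemma near3_cases {a b : Fin 3} (h : near3 a b) (hne : a ≠ b) :
    (a = 0 ∧ b = 1) ∨ (a = 1 ∧ b = 0) ∨ (a = 1 ∧ b = 2) ∨ (a = 2 ∧ b = 1) := by
  revert h hne; revert a b; decide

/-- All edges of an `H2` satisfying `CCond` are `near3` in every coordinate. -/
private lemma ccond_near {k : ℕ} {H2 : SimpleGraph (Fin k → Fin 3)} (hC : CCond H2)
    {x y : Fin k → Fin 3} (h : H2.Adj x y) (t : Fin k) : near3 (x t) (y t) := by
  obtain ⟨i, hi⟩ := hC.1 x y h
  by_cases ht : t = i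
  · subst ht
    rcases hi with ⟨hv, -⟩ | ⟨hv, -⟩ <;> rcases hv with ⟨h1, h2⟩ | ⟨h1, h2⟩ <;>
      rw [h1, h2] <;> decide
  · rcases hi with ⟨-, hn⟩ | ⟨-, hn⟩ <;> exact hn t ht

private lemma comp3_dist_eq {k : ℕ} {H2 : SimpleGraph (Fin k → Fin 3)} (hC : CCond H2)
    (i : Fin k) (x : Fin k → Fin 3) :
    (comp3 H2).dist (Sum.inl i) (Sum.inr x) = (x i : ℕ) + 1 := by
  have hne : (Sum.inl i : Fin k ⊕ (Fin k → Fin 3)) ≠ Sum.inr x := by simp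
  have hwalk : ∃ p : (comp3 H2).Walk (Sum.inl i) (Sum.inr x), p.length = (x i : ℕ) + 1 := by
    have h3 : x i = 0 ∨ x i = 1 ∨ x i = 2 := by omega
    rcases h3 with h0 | h1 | h2
    · have hadj : (comp3 H2).Adj (Sum.inl i) (Sum.inr x) := h0
      exact ⟨Walk.cons hadj Walk.nil, by simp [h0]⟩
    · obtain ⟨y, hxy, hcy⟩ := hC.2.1 i x h1
      have hy0 : y i = 0 := by
        rcases hcy.1 with ⟨ha, -⟩ | ⟨-, hb⟩
        · rw [h1] at ha; exact absurd ha (by decide)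
        · exact hb
      have hadj1 : (comp3 H2).Adj (Sum.inl i) (Sum.inr y) := hy0
      have hadj2 : (comp3 H2).Adj (Sum.inr y) (Sum.inr x) := hxy.symm
      exact ⟨Walk.cons hadj1 (Walk.cons hadj2 Walk.nil), by simp [h1]⟩
    · by_cases hz : ∃ j, x j = 0
      · obtain ⟨j, hj⟩ := hz
        have hij : j ≠ i := fun e => by rw [e, h2] at hj; exact absurd hj (by decide)
        set y : Fin k → Fin 3 := fun t => if t = i then 0 else if t = j then 0 else x t with hy
        have hadj1 : (comp3 H2).Adj (Sum.inl i) (Sum.inr y) := by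
          show (if i = i then (0 : Fin 3) else if i = j then 0 else x i) = 0; simp
        have hadj2 : (comp3 H2).Adj (Sum.inr y) (Sum.inl j) := by
          show (if j = i then (0 : Fin 3) else if j = j then 0 else x j) = 0; simp [hij]
        have hadj3 : (comp3 H2).Adj (Sum.inl j) (Sum.inr x) := hj
        exact ⟨Walk.cons hadj1 (Walk.cons hadj2 (Walk.cons hadj3 Walk.nil)), by simp [h2]⟩
      · push_neg at hz
        obtain ⟨y, hxy, hdy⟩ := hC.2.2 i x h2 hz
        have hy1 : y i = 1 := by
          rcases hdy.1 with ⟨ha, -⟩ | ⟨-, hb⟩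
          · rw [h2] at ha; exact absurd ha (by decide)
          · exact hb
        obtain ⟨z, hyz, hcz⟩ := hC.2.1 i y hy1
        have hz0 : z i = 0 := by
          rcases hcz.1 with ⟨ha, -⟩ | ⟨-, hb⟩
          · rw [hy1] at ha; exact absurd ha (by decide)
          · exact hb
        have hadj1 : (comp3 H2).Adj (Sum.inl i) (Sum.inr z) := hz0
        have hadj2 : (comp3 H2).Adj (Sum.inr z) (Sum.inr y) := hyz.symm
        have hadj3 : (comp3 H2).Adj (Sum.inr y) (Sum.inr x) := hxy.symm
        exact ⟨Walk.cons hadj1 (Walk.cons hadj2 (Walk.cons hadj3 Walk.nil)), by simp [h2]⟩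
  obtain ⟨p, hp⟩ := hwalk
  have hub : (comp3 H2).dist (Sum.inl i) (Sum.inr x) ≤ (x i : ℕ) + 1 := hp ▸ dist_le p
  have hreach : (comp3 H2).Reachable (Sum.inl i) (Sum.inr x) := ⟨p⟩
  have hpos : 0 < (comp3 H2).dist (Sum.inl i) (Sum.inr x) := hreach.pos_dist_of_ne hne
  have hne1 : x i ≠ 0 → (comp3 H2).dist (Sum.inl i) (Sum.inr x) ≠ 1 := by
    intro h0 h1
    exact h0 (dist_eq_one_iff_adj.mp h1)
  have hne2 : x i = 2 → (comp3 H2).dist (Sum.inl i) (Sum.inr x) ≠ 2 := by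
    intro h2 hd
    obtain ⟨q, hq⟩ := hreach.exists_walk_length_eq_dist
    rw [hd] at hq
    cases q with
    | cons h q' =>
      rename_i c
      cases c with
      | inl j => exact h
      | inr y =>
        cases q' with
        | nil => simp at hq
        | cons h' q'' =>
          cases q'' with
          | nil =>
            have hn := ccond_near hC (h' : H2.Adj y x) i
            have hy0 : y i = 0 := h
            rw [hy0, h2] at hn
            exact absurd hn (by decide)
          | cons h3 q3 => simp at hq
  have h3 : x i = 0 ∨ x i = 1 ∨ x i = 2 := by omega
  rcases h3 with h0 | h1 | h2
  · rw [h0]; omega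
  · have := hne1 (by rw [h1]; decide)
    rw [h1] at hub ⊢
    have : (x i : ℕ) = 1 := by rw [h1]; rfl
    omega
  · have ha := hne1 (by rw [h2]; decide)
    have hb := hne2 h2
    have hv : (x i : ℕ) = 2 := by rw [h2]; rfl
    omega

private lemma walk_len2 {V : Type*} {G : SimpleGraph V} {u v : V} (p : G.Walk u v)
    (h : p.length = 2) : ∃ c, G.Adj u c ∧ G.Adj c v := by
  match p with
  | .nil => simp at h
  | .cons h1 .nil => simp at h
  | .cons h1 (.cons h2 .nil) => exact ⟨_, h1, h2⟩
  | .cons h1 (.cons h2 (.cons h3 s)) => simp [Walk.length_cons] at h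

private lemma walk_len3 {V : Type*} {G : SimpleGraph V} {u v : V} (p : G.Walk u v)
    (h : p.length = 3) : ∃ a b, G.Adj u a ∧ G.Adj a b ∧ G.Adj b v := by
  match p with
  | .nil => simp at h
  | .cons h1 .nil => simp at h
  | .cons h1 (.cons h2 .nil) => simp at h
  | .cons h1 (.cons h2 (.cons h3 .nil)) => exact ⟨_, _, h1, h2, h3⟩
  | .cons h1 (.cons h2 (.cons h3 (.cons h4 s))) => simp [Walk.length_cons] at h

private def mkH2 {V : Type*} (G : SimpleGraph V) {k : ℕ} (p : (Fin k → Fin 3) → V) :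
    SimpleGraph (Fin k → Fin 3) where
  Adj x y := G.Adj (p x) (p y)
  symm := ⟨fun _ _ h => h.symm⟩
  loopless := ⟨fun x h => G.loopless.irrefl _ h⟩

/-- **Proposition.** For `k ≥ 2`, a finite connected simple graph `G` is a `(k,3)`-CRG iff
`G` is isomorphic to a graph in `C_k`. -/
theorem isCRG_three_iff {V : Type*} [Fintype V] (k : ℕ) (hk : 2 ≤ k) (G : SimpleGraph V)
    (hconn : G.Connected) (hcard : 2 ≤ Fintype.card V) :
    IsCRG G k 3 ↔ ∃ H ∈ Cset k, Nonempty (G ≃g H) := by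
  constructor
  · intro hcrg
    obtain ⟨w, hwinj, hwne, hPinj, hPran⟩ := hcrg
    have hmem : ∀ u : {u : V // u ∉ Set.range w}, ∀ i, 1 ≤ G.dist (w i) u.1 ∧ G.dist (w i) u.1 ≤ 3 := by
      intro u i
      have hm : (fun i => G.dist (w i) u.1) ∈ {x : Fin k → ℕ | ∀ i, 1 ≤ x i ∧ x i ≤ 3} := by
        rw [← hPran]; exact ⟨u, rfl⟩
      exact hm i
    have hsurj : ∀ x : Fin k → Fin 3,
        ∃ u : {u : V // u ∉ Set.range w}, ∀ i, G.dist (w i) u.1 = (x i : ℕ) + 1 := by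
      intro x
      have hx : (fun i => ((x i : ℕ) + 1)) ∈ {g : Fin k → ℕ | ∀ i, 1 ≤ g i ∧ g i ≤ 3} := by
        intro i; simp only; have := (x i).isLt; omega
      rw [← hPran] at hx
      obtain ⟨u, hu⟩ := hx
      exact ⟨u, fun i => congrFun hu i⟩
    choose pick hpick using hsurj
    have hpick_inj : Function.Injective pick := by
      intro x y hxy
      funext i
      have h1 := hpick x i
      rw [hxy, hpick y i] at h1
      exact Fin.ext (by omega)
    have hpick_surj : Function.Surjective pick := by
      intro u
      refine ⟨fun i => ⟨G.dist (w i) u.1 - 1, by have := (hmem u i).2; omega⟩, ?_⟩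
      apply hPinj
      funext i
      simp only
      rw [hpick]
      have h1 := (hmem u i).1
      show (G.dist (w i) u.1 - 1) + 1 = G.dist (w i) u.1
      omega
    have hnear : ∀ x y : Fin k → Fin 3, G.Adj (pick x).1 (pick y).1 → ∀ t, near3 (x t) (y t) := by
      intro x y h t
      have hd1 : G.dist (pick y).1 (pick x).1 = 1 := dist_eq_one_iff_adj.mpr h.symm
      have hd2 : G.dist (pick x).1 (pick y).1 = 1 := dist_eq_one_iff_adj.mpr h
      have h1 : G.dist (w t) (pick x).1 ≤ G.dist (w t) (pick y).1 + 1 := by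
        have ht := hconn.dist_triangle (u := w t) (v := (pick y).1) (w := (pick x).1)
        rwa [hd1] at ht
      have h2 : G.dist (w t) (pick y).1 ≤ G.dist (w t) (pick x).1 + 1 := by
        have ht := hconn.dist_triangle (u := w t) (v := (pick x).1) (w := (pick y).1)
        rwa [hd2] at ht
      rw [hpick x t, hpick y t] at h1 h2
      exact ⟨by omega, by omega⟩
    have hindep : ∀ i j, ¬ G.Adj (w i) (w j) := by
      intro i j hadj
      have hij : j ≠ i := fun e => G.loopless.irrefl _ (e ▸ hadj)
      set x : Fin k → Fin 3 := fun t => if t = i then 2 else 0 with hx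
      have h1 : G.dist (w i) (pick x).1 = 3 := by
        rw [hpick x i]
        norm_num [hx]
      have h2 : G.dist (w j) (pick x).1 = 1 := by
        rw [hpick x j]
        norm_num [hx, hij]
      have ht := hconn.dist_triangle (u := w i) (v := w j) (w := (pick x).1)
      rw [dist_eq_one_iff_adj.mpr hadj, h2, h1] at ht
      omega
    have hWadj : ∀ (x : Fin k → Fin 3) (t : Fin k), G.Adj (w t) (pick x).1 ↔ x t = 0 := by
      intro x t
      constructor
      · intro h
        have hd := dist_eq_one_iff_adj.mpr h
        rw [hpick x t] at hd
        exact Fin.ext (by omega)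
      · intro h
        have hd : G.dist (w t) (pick x).1 = 1 := by rw [hpick x t, h]; rfl
        exact dist_eq_one_iff_adj.mp hd
    set H2 : SimpleGraph (Fin k → Fin 3) := mkH2 G (fun x => (pick x).1) with hH2
    have hH2adj : ∀ x y, H2.Adj x y ↔ G.Adj (pick x).1 (pick y).1 := fun x y => Iff.rfl
    have hCC : CCond H2 := by
      refine ⟨?_, ?_, ?_⟩
      · intro x y h
        rw [hH2adj] at h
        have hne : x ≠ y := by
          rintro rfl
          exact G.loopless.irrefl _ h
        obtain ⟨i, hi⟩ := Function.ne_iff.mp hne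
        have hni := hnear x y h
        refine ⟨i, ?_⟩
        rcases near3_cases (hni i) hi with ⟨h1, h2⟩ | ⟨h1, h2⟩ | ⟨h1, h2⟩ | ⟨h1, h2⟩
        · exact Or.inl ⟨Or.inl ⟨h1, h2⟩, fun t _ => hni t⟩
        · exact Or.inl ⟨Or.inr ⟨h1, h2⟩, fun t _ => hni t⟩
        · exact Or.inr ⟨Or.inl ⟨h1, h2⟩, fun t _ => hni t⟩
        · exact Or.inr ⟨Or.inr ⟨h1, h2⟩, fun t _ => hni t⟩
      · intro i x hx1
        have hd2 : G.dist (w i) (pick x).1 = 2 := by rw [hpick x i, hx1]; rfl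
        obtain ⟨p, hp⟩ := hconn.exists_walk_length_eq_dist (w i) (pick x).1
        rw [hd2] at hp
        obtain ⟨v, hv1, hv2⟩ := walk_len2 p hp
        have hvW : v ∉ Set.range w := by
          rintro ⟨j, rfl⟩
          exact hindep i j hv1
        obtain ⟨y, hy⟩ := hpick_surj ⟨v, hvW⟩
        have hvy : (pick y).1 = v := by rw [hy]
        have hadjxy : G.Adj (pick x).1 (pick y).1 := by rw [hvy]; exact hv2.symm
        have hy0 : y i = 0 := (hWadj y i).mp (by rw [hvy]; exact hv1)
        exact ⟨y, (hH2adj x y).mpr hadjxy, Or.inr ⟨hx1, hy0⟩, fun t _ => hnear x y hadjxy t⟩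
      · intro i x hx2 hx0
        have hd3 : G.dist (w i) (pick x).1 = 3 := by rw [hpick x i, hx2]; rfl
        obtain ⟨p, hp⟩ := hconn.exists_walk_length_eq_dist (w i) (pick x).1
        rw [hd3] at hp
        obtain ⟨a, b, h1, h2, h3⟩ := walk_len3 p hp
        have hbW : b ∉ Set.range w := by
          rintro ⟨j, rfl⟩
          exact hx0 j ((hWadj x j).mp h3)
        have hdb : G.dist (w i) b = 2 := by
          have hle : G.dist (w i) b ≤ 2 := by
            have := dist_le (Walk.cons h1 (Walk.cons h2 Walk.nil))
            simpa using this
          have hge : 3 ≤ G.dist (w i) b + 1 := by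
            have ht := hconn.dist_triangle (u := w i) (v := b) (w := (pick x).1)
            rw [hd3, dist_eq_one_iff_adj.mpr h3] at ht
            exact ht
          omega
        obtain ⟨y, hy⟩ := hpick_surj ⟨b, hbW⟩
        have hby : (pick y).1 = b := by rw [hy]
        have hadjxy : G.Adj (pick x).1 (pick y).1 := by rw [hby]; exact h3.symm
        have hy1 : y i = 1 := by
          have hd := hpick y i
          rw [hby, hdb] at hd
          exact Fin.ext (by omega)
        exact ⟨y, (hH2adj x y).mpr hadjxy, Or.inr ⟨hx2, hy1⟩, fun t _ => hnear x y hadjxy t⟩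
    have hginj : Function.Injective (Sum.elim w (fun x : Fin k → Fin 3 => (pick x).1)) := by
      rintro (i | x) (j | y) h
      · simp only [Sum.elim_inl] at h
        rw [hwinj h]
      · simp only [Sum.elim_inl, Sum.elim_inr] at h
        exact absurd ⟨i, h⟩ (pick y).2
      · simp only [Sum.elim_inl, Sum.elim_inr] at h
        exact absurd ⟨j, h.symm⟩ (pick x).2
      · simp only [Sum.elim_inr] at h
        rw [hpick_inj (Subtype.ext h)]
    have hgsurj : Function.Surjective (Sum.elim w (fun x : Fin k → Fin 3 => (pick x).1)) := by
      intro v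
      by_cases hv : v ∈ Set.range w
      · obtain ⟨i, rfl⟩ := hv
        exact ⟨Sum.inl i, rfl⟩
      · obtain ⟨x, hx⟩ := hpick_surj ⟨v, hv⟩
        exact ⟨Sum.inr x, congrArg Subtype.val hx⟩
    have hmap : ∀ a b, G.Adj (Sum.elim w (fun x : Fin k → Fin 3 => (pick x).1) a)
        (Sum.elim w (fun x : Fin k → Fin 3 => (pick x).1) b) ↔ (comp3 H2).Adj a b := by
      rintro (i | x) (j | y)
      · exact ⟨fun h => hindep i j h, fun h => h.elim⟩
      · exact hWadj y i
      · exact (G.adj_comm _ _).trans (hWadj x j)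
      · exact Iff.rfl
    refine ⟨comp3 H2, ⟨H2, hCC, rfl⟩, ⟨?_⟩⟩
    exact (RelIso.mk (Equiv.ofBijective _ ⟨hginj, hgsurj⟩) (fun {a b} => hmap a b)).symm
  · rintro ⟨H, ⟨H2, hC, rfl⟩, ⟨f⟩⟩
    set w : Fin k → V := fun i => f.symm (Sum.inl i) with hw
    have hfw : ∀ i, f (w i) = Sum.inl i := fun i => f.apply_symm_apply _
    have hinr : ∀ u : V, u ∉ Set.range w → ∃ x, f u = Sum.inr x := by
      intro u hu
      cases hfu : f u with
      | inl j =>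
        exact absurd ⟨j, by rw [hw]; simp only [← hfu]; exact f.symm_apply_apply u⟩ hu
      | inr x => exact ⟨x, rfl⟩
    have hdist : ∀ (u : V) (x : Fin k → Fin 3), f u = Sum.inr x →
        ∀ i, G.dist (w i) u = (x i : ℕ) + 1 := by
      intro u x hfu i
      have h1 : G.dist (w i) u = (comp3 H2).dist (f (w i)) (f u) := (iso_dist f _ _).symm
      rw [h1, hfw, hfu, comp3_dist_eq hC]
    refine ⟨w, ?_, ?_, ?_, ?_⟩
    · intro i j hij
      have h := congrArg f hij
      rw [hfw, hfw] at h
      exact Sum.inl_injective h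
    · intro hU
      have hm : f.symm (Sum.inr (fun _ => 0)) ∈ Set.range w := hU ▸ Set.mem_univ _
      obtain ⟨i, hi⟩ := hm
      have h := congrArg f hi
      rw [hfw, f.apply_symm_apply] at h
      simp at h
    · intro u v huv
      obtain ⟨xu, hxu⟩ := hinr u.1 u.2
      obtain ⟨xv, hxv⟩ := hinr v.1 v.2
      have hx : xu = xv := by
        funext i
        have h1 := congrFun huv i
        simp only at h1
        rw [hdist u.1 xu hxu i, hdist v.1 xv hxv i] at h1
        exact Fin.ext (by omega)
      exact Subtype.ext (f.injective (by rw [hxu, hxv, hx]))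
    · ext g
      simp only [Set.mem_range, Set.mem_setOf_eq]
      constructor
      · rintro ⟨u, rfl⟩ i
        obtain ⟨x, hx⟩ := hinr u.1 u.2
        simp only
        rw [hdist u.1 x hx i]
        have := (x i).isLt
        omega
      · intro hg
        set x : Fin k → Fin 3 := fun i => ⟨g i - 1, by have := (hg i).2; omega⟩ with hxdef
        have hu : f.symm (Sum.inr x) ∉ Set.range w := by
          rintro ⟨i, hi⟩
          have h := congrArg f hi
          rw [hfw, f.apply_symm_apply] at h
          simp at h
        refine ⟨⟨f.symm (Sum.inr x), hu⟩, ?_⟩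
        funext i
        rw [hdist _ x (f.apply_symm_apply _) i]
        have h1 : (x i : ℕ) = g i - 1 := rfl
        have := (hg i).1
        omega
end

section
/- If a finite connected simple graph G is a (k,m)-completeness-resolvable graph with k ≥ 2 and m ≥ 2, then m = 2 or m = 3. -/
open SimpleGraph

/-- **Lemma.** If a finite connected simple graph `G` is a `(k,m)`-CRG with `k ≥ 2` and
`m ≥ 2`, then `m = 2` or `m = 3`. -/
theorem m_eq_two_or_three {V : Type*} [Fintype V] (G : SimpleGraph V)
    (hconn : G.Connected) (hcard : 2 ≤ Fintype.card V) (k m : ℕ) (hk : 2 ≤ k)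
    (hm : 2 ≤ m) (h : IsCRG G k m) : m = 2 ∨ m = 3 := by
  obtain ⟨w, hinj, hne, hfinj, hrange⟩ := h
  set i0 : Fin k := ⟨0, by omega⟩
  set i1 : Fin k := ⟨1, by omega⟩
  have hi01 : i0 ≠ i1 := by simp [i0, i1, Fin.ext_iff]
  -- vertex u with tuple (m,1,1,...)
  have hmem1 : (fun i => if i = i0 then m else 1) ∈
      {x : Fin k → ℕ | ∀ i, 1 ≤ x i ∧ x i ≤ m} := by
    intro i; dsimp only [Set.mem_setOf_eq]; split <;> omega
  rw [← hrange] at hmem1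
  obtain ⟨u, hu⟩ := hmem1
  -- vertex v with all-ones tuple
  have hmem2 : (fun _ => 1) ∈ {x : Fin k → ℕ | ∀ i, 1 ≤ x i ∧ x i ≤ m} := by
    intro i; exact ⟨le_refl 1, le_trans one_le_two hm⟩
  rw [← hrange] at hmem2
  obtain ⟨v, hv⟩ := hmem2
  have hu0 : G.dist (w i0) u.1 = m := by
    have := congrFun hu i0; simpa using this
  have hu1 : G.dist (w i1) u.1 = 1 := by
    have := congrFun hu i1; simpa [hi01.symm] using this
  have hv0 : G.dist (w i0) v.1 = 1 := congrFun hv i0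
  have hv1 : G.dist (w i1) v.1 = 1 := congrFun hv i1
  have t1 : G.dist (w i0) u.1 ≤ G.dist (w i0) (w i1) + G.dist (w i1) u.1 :=
    hconn.dist_triangle
  have t2 : G.dist (w i0) (w i1) ≤ G.dist (w i0) v.1 + G.dist v.1 (w i1) :=
    hconn.dist_triangle
  have hv1' : G.dist v.1 (w i1) = 1 := by rw [SimpleGraph.dist_comm]; exact hv1
  rw [hv1'] at t2
  omega
end
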